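/- arXiv:1811.08261 — 2 statements merged into one kernel-verified Lean document; each statement's English description precedes it below -/
import Mathlib

section
/- ∑_{m,n≥0} q^{2m² + 2mn + n² − m − n}(1 − q^{2m + 2n}) / ((q^2;q^2)_m (q^2;q^2)_n) = ∑_{m,n≥0} q^{2m² + 2mn + n² − m + n} / ((q^2;q^2)_m (q^2;q^2)_n) for |q| < 1. -/
open Finset

/-- Finite q-Pochhammer symbol `(a; q)_n = ∏_{j=0}^{n-1} (1 - a q^j)`. -/
noncomputable def qPoch (a q : ℂ) (n : ℕ) : ℂ := ∏ j ∈ Finset.range n, (1 - a * q ^ j)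

/-- Infinite q-Pochhammer symbol `(a; q)_∞`. -/
noncomputable def qPochInf (a q : ℂ) : ℂ := ∏' j : ℕ, (1 - a * q ^ j)

/-- Gaussian binomial coefficient `[a choose b]_q`, equal to
`(q;q)_a / ((q;q)_b (q;q)_{a-b})` when `a ≥ b ≥ 0`, and `0` otherwise. -/
noncomputable def qbinom (q : ℂ) (a b : ℤ) : ℂ :=
  if 0 ≤ b ∧ b ≤ a then
    qPoch q q a.toNat / (qPoch q q b.toNat * qPoch q q (a - b).toNat)
  else 0

private lemma st13nat1 (m n : ℕ) :
    (2*m^2 - m) + (n^2 - n) ≤ 2*m^2 + 2*m*n + n^2 - m - n := by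
  have hm : m ≤ m^2 := Nat.le_self_pow (by norm_num) m
  have hn : n ≤ n^2 := Nat.le_self_pow (by norm_num) n
  have h1 : m ≤ 2*m^2 + 2*m*n + n^2 := by nlinarith
  have h2 : n ≤ 2*m^2 + 2*m*n + n^2 - m := by
    have : m + n ≤ 2*m^2 + 2*m*n + n^2 := by nlinarith
    omega
  have hm2 : m ≤ 2*m^2 := by nlinarith
  zify [hm2, hn, h1, h2]
  nlinarith [mul_nonneg (Nat.cast_nonneg m : (0:ℤ) ≤ m) (Nat.cast_nonneg n : (0:ℤ) ≤ n)]

private lemma st13nat2 (m n : ℕ) :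
    2*m^2 + 2*m*n + n^2 + n - m = (2*m^2 + 2*m*n + n^2 - m - n) + 2*n := by
  have hm : m ≤ m^2 := Nat.le_self_pow (by norm_num) m
  have hn : n ≤ n^2 := Nat.le_self_pow (by norm_num) n
  have h1 : m ≤ 2*m^2 + 2*m*n + n^2 := by nlinarith
  have h0 : m ≤ 2*m^2 + 2*m*n + n^2 + n := by nlinarith
  have h2 : n ≤ 2*m^2 + 2*m*n + n^2 - m := by
    have : m + n ≤ 2*m^2 + 2*m*n + n^2 := by nlinarith
    omega
  zify [h0, h1, h2]
  ring

private lemma st13nat3 (m n : ℕ) :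
    2*m^2 + 2*m*(n+1) + (n+1)^2 - m - (n+1)
      = (2*m^2 + 2*m*n + n^2 - m - n) + (2*m + 2*n) := by
  have hm : m ≤ m^2 := Nat.le_self_pow (by norm_num) m
  have hn : n ≤ n^2 := Nat.le_self_pow (by norm_num) n
  have h1 : m ≤ 2*m^2 + 2*m*n + n^2 := by nlinarith
  have h2 : n ≤ 2*m^2 + 2*m*n + n^2 - m := by
    have : m + n ≤ 2*m^2 + 2*m*n + n^2 := by nlinarith
    omega
  have h3 : m ≤ 2*m^2 + 2*m*(n+1) + (n+1)^2 := by nlinarith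
  have h4 : n+1 ≤ 2*m^2 + 2*m*(n+1) + (n+1)^2 - m := by
    have : m + (n+1) ≤ 2*m^2 + 2*m*(n+1) + (n+1)^2 := by nlinarith
    omega
  zify [h1, h2, h3, h4]
  ring

private lemma st13nat4 (m : ℕ) : 2*(m+1)^2 - (m+1) = (2*m^2 - m) + (4*m+1) := by
  have hm : m ≤ 2*m^2 := by nlinarith [Nat.le_self_pow (two_ne_zero) m]
  have hm1 : m+1 ≤ 2*(m+1)^2 := by nlinarith
  zify [hm, hm1]
  ring

private lemma st13nat5 (n : ℕ) : (n+1)^2 - (n+1) = (n^2 - n) + 2*n := by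
  have hn : n ≤ n^2 := Nat.le_self_pow (by norm_num) n
  have hn1 : n+1 ≤ (n+1)^2 := Nat.le_self_pow (by norm_num) _
  zify [hn, hn1]
  ring

set_option maxHeartbeats 1000000 in
/-- a little Göllnitz related double-series identity. -/
theorem stmt13 (q : ℂ) (hq : ‖q‖ < 1) :
    ∑' p : ℕ × ℕ,
        q ^ (2 * p.1 ^ 2 + 2 * p.1 * p.2 + p.2 ^ 2 - p.1 - p.2)
          * (1 - q ^ (2 * p.1 + 2 * p.2))
          / (qPoch (q ^ 2) (q ^ 2) p.1 * qPoch (q ^ 2) (q ^ 2) p.2)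
      = ∑' p : ℕ × ℕ,
          q ^ (2 * p.1 ^ 2 + 2 * p.1 * p.2 + p.2 ^ 2 + p.2 - p.1)
          / (qPoch (q ^ 2) (q ^ 2) p.1 * qPoch (q ^ 2) (q ^ 2) p.2) := by
  have hr0 : (0:ℝ) ≤ ‖q‖ := norm_nonneg q
  set r : ℝ := ‖q‖ with hrdef
  have hr2 : r^2 < 1 := by nlinarith
  have hy0 : (0:ℝ) < 1 - r^2 := by linarith
  set y : ℝ := (1 - r^2)⁻¹ with hydef
  have hy1 : (0:ℝ) < y := inv_pos.mpr hy0
  set P : ℕ → ℂ := fun k => qPoch (q^2) (q^2) k with hPdef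
  -- lower bound for Pochhammer norms
  have hP : ∀ k : ℕ, (1 - r^2)^k ≤ ‖P k‖ := by
    intro k
    rw [hPdef]
    simp only [qPoch]
    rw [norm_prod]
    have hterm : ∀ j ∈ Finset.range k, 1 - r^2 ≤ ‖(1:ℂ) - (q^2) * (q^2)^j‖ := by
      intro j _
      have h1 : ‖(q^2) * (q^2)^j‖ = r^(2*j+2) := by
        rw [norm_mul, norm_pow, norm_pow, norm_pow]; ring
      have h2 : r^(2*j+2) ≤ r^2 := pow_le_pow_of_le_one hr0 hq.le (by omega)
      have h3 := norm_sub_norm_le (1:ℂ) ((q^2)*(q^2)^j)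
      rw [norm_one, h1] at h3
      linarith
    calc (1 - r^2)^k = ∏ _j ∈ Finset.range k, (1 - r^2) := by
          rw [Finset.prod_const, Finset.card_range]
      _ ≤ _ := Finset.prod_le_prod (fun j _ => hy0.le) hterm
  have hPne : ∀ k, P k ≠ 0 := by
    intro k h
    have := hP k
    rw [h, norm_zero] at this
    exact absurd this (not_le.mpr (pow_pos hy0 k))
  -- majorant sequences
  set A : ℕ → ℝ := fun m => r^(2*m^2 - m) * y^m with hAdef
  set B : ℕ → ℝ := fun n => r^(n^2 - n) * y^n with hBdef
  have hApos : ∀ m, 0 ≤ A m := fun m => by rw [hAdef]; positivity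
  have hBpos : ∀ n, 0 ≤ B n := fun n => by rw [hBdef]; positivity
  have htend : Filter.Tendsto (fun m : ℕ => r^m * y) Filter.atTop (nhds 0) := by
    have := (tendsto_pow_atTop_nhds_zero_of_lt_one hr0 hq).mul_const y
    simpa using this
  have hev : ∀ᶠ m in Filter.atTop, r^m * y ≤ 1/2 :=
    (htend.eventually_lt_const (by norm_num : (0:ℝ) < 1/2)).mono fun _ h => h.le
  have hA : Summable A := by
    apply summable_of_ratio_norm_eventually_le (r := 1/2) (by norm_num)
    filter_upwards [hev] with m hm
    have e : A (m+1) = (r^(4*m+1) * y) * A m := by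
      rw [hAdef]
      simp only
      rw [st13nat4 m, pow_add, pow_succ]
      ring
    rw [e, Real.norm_eq_abs, Real.norm_eq_abs, abs_of_nonneg (hApos m),
      abs_of_nonneg (by positivity)]
    have h1 : r^(4*m+1) ≤ r^m := pow_le_pow_of_le_one hr0 hq.le (by omega)
    have h2 : r^(4*m+1) * y ≤ 1/2 := le_trans (by nlinarith) hm
    nlinarith [hApos m]
  have hB : Summable B := by
    apply summable_of_ratio_norm_eventually_le (r := 1/2) (by norm_num)
    filter_upwards [hev] with n hn
    have e : B (n+1) = (r^(2*n) * y) * B n := by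
      rw [hBdef]
      simp only
      rw [st13nat5 n, pow_add, pow_succ]
      ring
    rw [e, Real.norm_eq_abs, Real.norm_eq_abs, abs_of_nonneg (hBpos n),
      abs_of_nonneg (by positivity)]
    have h1 : r^(2*n) ≤ r^n := pow_le_pow_of_le_one hr0 hq.le (by omega)
    have h2 : r^(2*n) * y ≤ 1/2 := le_trans (by nlinarith) hn
    nlinarith [hBpos n]
  set M : ℕ × ℕ → ℝ := fun p => A p.1 * (2 * B p.2) with hMdef
  have hM : Summable M := hA.mul_of_nonneg (hB.mul_left 2)
    (fun m => hApos m) (fun n => by have := hBpos n; positivity)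
  -- generic norm bound
  have hbound : ∀ (m n e : ℕ) (w : ℂ), (2*m^2 - m) + (n^2 - n) ≤ e → ‖w‖ ≤ 2 →
      ‖q^e * w / (P m * P n)‖ ≤ M (m, n) := by
    intro m n e w he hw
    rw [norm_div, norm_mul, norm_mul, norm_pow]
    have hden : (1-r^2)^m * (1-r^2)^n ≤ ‖P m‖ * ‖P n‖ :=
      mul_le_mul (hP m) (hP n) (pow_nonneg hy0.le n) (norm_nonneg _)
    have hnum : r^e * ‖w‖ ≤ r^((2*m^2 - m) + (n^2 - n)) * 2 :=
      mul_le_mul (pow_le_pow_of_le_one hr0 hq.le he) hw (norm_nonneg w)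
        (pow_nonneg hr0 _)
    have hd0 : (0:ℝ) < (1-r^2)^m * (1-r^2)^n := by positivity
    have := div_le_div₀ (by positivity) hnum hd0 hden
    refine le_trans this (le_of_eq ?_)
    rw [hMdef, hAdef, hBdef]
    simp only
    rw [pow_add, hydef, inv_pow, inv_pow]
    field_simp
  -- the three summand families
  set f : ℕ × ℕ → ℂ := fun p =>
    q ^ (2 * p.1 ^ 2 + 2 * p.1 * p.2 + p.2 ^ 2 - p.1 - p.2)
      * (1 - q ^ (2 * p.1 + 2 * p.2)) / (P p.1 * P p.2) with hfdef
  set F : ℕ × ℕ → ℂ := fun p =>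
    q ^ (2 * p.1 ^ 2 + 2 * p.1 * p.2 + p.2 ^ 2 + p.2 - p.1) / (P p.1 * P p.2)
    with hFdef
  set g : ℕ × ℕ → ℂ := fun p =>
    q ^ (2 * p.1 ^ 2 + 2 * p.1 * p.2 + p.2 ^ 2 - p.1 - p.2)
      * (1 - q ^ (2 * p.2)) / (P p.1 * P p.2) with hgdef
  have hone_sub : ∀ k : ℕ, ‖(1:ℂ) - q ^ k‖ ≤ 2 := by
    intro k
    have h1 : ‖q ^ k‖ ≤ 1 := by
      rw [norm_pow]; exact pow_le_one₀ hr0 hq.le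
    calc ‖(1:ℂ) - q ^ k‖ ≤ ‖(1:ℂ)‖ + ‖q ^ k‖ := norm_sub_le _ _
      _ ≤ 2 := by rw [norm_one]; linarith
  have hfS : Summable f := by
    apply Summable.of_norm_bounded hM
    intro p
    exact hbound p.1 p.2 _ _ (st13nat1 p.1 p.2) (hone_sub _)
  have hFS : Summable F := by
    apply Summable.of_norm_bounded hM
    intro p
    have : F p = q ^ (2 * p.1 ^ 2 + 2 * p.1 * p.2 + p.2 ^ 2 + p.2 - p.1) * 1
        / (P p.1 * P p.2) := by rw [hFdef]; ring
    rw [this]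
    refine hbound p.1 p.2 _ _ ?_ (by norm_num)
    rw [st13nat2 p.1 p.2]
    exact le_trans (st13nat1 p.1 p.2) (Nat.le_add_right _ _)
  have hgS : Summable g := by
    apply Summable.of_norm_bounded hM
    intro p
    exact hbound p.1 p.2 _ _ (st13nat1 p.1 p.2) (hone_sub _)
  set σ : ℕ × ℕ → ℕ × ℕ := fun p => (p.1, p.2 + 1) with hσdef
  have hσinj : Function.Injective σ := by
    intro a b h
    rw [hσdef] at h
    simp only [Prod.mk.injEq] at h
    exact Prod.ext h.1 (by omega)
  have hgσS : Summable (fun p => g (σ p)) := hgS.comp_injective hσinj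
  -- key pointwise identity
  have key : ∀ p : ℕ × ℕ, f p - F p = g p - g (σ p) := by
    rintro ⟨m, n⟩
    rw [hfdef, hFdef, hgdef, hσdef]
    simp only
    rw [st13nat2 m n, st13nat3 m n]
    have hPn1 : P (n+1) = P n * (1 - q^2 * (q^2)^n) := by
      rw [hPdef]; simp only [qPoch]; rw [Finset.prod_range_succ]
    have hone : (1:ℂ) - q^2 * (q^2)^n ≠ 0 := by
      have : ‖q^2 * (q^2)^n‖ < 1 := by
        rw [norm_mul, norm_pow, norm_pow, norm_pow]
        calc r^2 * (r^2)^n ≤ r^2 * 1 := by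
              have : (r^2)^n ≤ 1 := pow_le_one₀ (by positivity) hr2.le
              nlinarith
          _ < 1 := by linarith
      intro h
      rw [sub_eq_zero] at h
      rw [← h] at this
      simp at this
    rw [hPn1]
    have e2 : q ^ (2*(n+1)) = q^2 * (q^2)^n := by ring
    have e3 : q ^ (2 * m ^ 2 + 2 * m * n + n ^ 2 - m - n + 2 * n)
        = q ^ (2 * m ^ 2 + 2 * m * n + n ^ 2 - m - n) * q ^ (2*n) := pow_add q _ _
    have e4 : q ^ (2 * m ^ 2 + 2 * m * n + n ^ 2 - m - n + (2 * m + 2 * n))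
        = q ^ (2 * m ^ 2 + 2 * m * n + n ^ 2 - m - n) * (q ^ (2*m) * q ^ (2*n)) := by
      rw [pow_add, pow_add]
    have e5 : q ^ (2 * m + 2 * n) = q ^ (2*m) * q ^ (2*n) := pow_add q _ _
    rw [e2, e3, e4, e5]
    field_simp [hPne m, hPne n, hone]
    ring
  -- conclusion
  have h3 : ∑' p, g (σ p) = ∑' p, g p := by
    apply hσinj.tsum_eq
    intro p hp
    rcases p with ⟨m, n⟩
    rcases n with _ | k
    · exfalso
      apply hp
      show q ^ (2 * m ^ 2 + 2 * m * 0 + 0 ^ 2 - m - 0) * (1 - q ^ (2 * 0)) / (P m * P 0) = 0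
      norm_num
    · exact ⟨(m, k), rfl⟩
  have h4 : ∑' p, f p - ∑' p, F p = 0 := by
    rw [← Summable.tsum_sub hfS hFS]
    calc ∑' p, (f p - F p) = ∑' p, (g p - g (σ p)) := tsum_congr key
      _ = ∑' p, g p - ∑' p, g (σ p) := Summable.tsum_sub hgS hgσS
      _ = 0 := by rw [h3, sub_self]
  have h5 : ∑' p, f p = ∑' p, F p := sub_eq_zero.mp h4
  -- match goal with f and F
  calc ∑' p : ℕ × ℕ,
        q ^ (2 * p.1 ^ 2 + 2 * p.1 * p.2 + p.2 ^ 2 - p.1 - p.2)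
          * (1 - q ^ (2 * p.1 + 2 * p.2))
          / (qPoch (q ^ 2) (q ^ 2) p.1 * qPoch (q ^ 2) (q ^ 2) p.2)
      = ∑' p, f p := by rw [hfdef, hPdef]
    _ = ∑' p, F p := h5
    _ = _ := by rw [hFdef, hPdef]
end

section
/- For M and s positive integers and 0 ≤ r ≤ M, the identity (−x q^{s+r}; q^M)_∞ / (x q^s; q^M)_∞ = ₂φ₁(−q^r, −q^{r+M}; q^M; q^{2M}, x² q^{2s}) + x q^s (1 + q^r)/(1 − q^M) · ₂φ₁(−q^{r+2M}, −q^{r+M}; q^{3M}; q^{2M}, x² q^{2s}) holds as formal power series in x and q (or for |q| < 1, |x| small). -/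
open Finset

/-- Basic hypergeometric series `₂φ₁(a, b; c; Q, z)`. -/
noncomputable def phi21 (a b c Q z : ℂ) : ℂ :=
  ∑' n : ℕ, qPoch a Q n * qPoch b Q n / (qPoch Q Q n * qPoch c Q n) * z ^ n

open Filter Topology

/-! ### Auxiliary lemmas -/

lemma qPoch_zero (a Q : ℂ) : qPoch a Q 0 = 1 := by simp [qPoch]

lemma qPoch_succ (a Q : ℂ) (n : ℕ) : qPoch a Q (n + 1) = qPoch a Q n * (1 - a * Q ^ n) :=
  Finset.prod_range_succ _ n

lemma qPoch_succ' (a Q : ℂ) (n : ℕ) : qPoch a Q (n + 1) = (1 - a) * qPoch (a * Q) Q n := by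
  rw [qPoch, Finset.prod_range_succ', qPoch]
  simp only [pow_zero, mul_one]
  rw [mul_comm]
  congr 1
  refine Finset.prod_congr rfl fun j _ => ?_
  rw [pow_succ']
  ring

lemma qPoch_two_mul (a Q : ℂ) (k : ℕ) :
    qPoch a Q (2 * k) = qPoch a (Q ^ 2) k * qPoch (a * Q) (Q ^ 2) k := by
  induction k with
  | zero => simp [qPoch]
  | succ k ih =>
    have h : 2 * (k + 1) = (2 * k) + 1 + 1 := by ring
    rw [h, qPoch_succ, qPoch_succ, ih, qPoch_succ, qPoch_succ]
    ring

lemma one_sub_ne_zero_of_norm_lt_one {u : ℂ} (hu : ‖u‖ < 1) : (1 : ℂ) - u ≠ 0 := by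
  intro h
  rw [sub_eq_zero] at h
  rw [← h] at hu
  simp at hu

lemma norm_term_lt_one {a Q : ℂ} (ha : ‖a‖ < 1) (hQ : ‖Q‖ ≤ 1) (j : ℕ) : ‖a * Q ^ j‖ < 1 := by
  rw [norm_mul, norm_pow]
  calc ‖a‖ * ‖Q‖ ^ j ≤ ‖a‖ * 1 := by
        have := pow_le_one₀ (norm_nonneg Q) hQ (n := j)
        exact mul_le_mul_of_nonneg_left this (norm_nonneg a)
    _ < 1 := by rwa [mul_one]

lemma qPoch_ne_zero {a Q : ℂ} (ha : ‖a‖ < 1) (hQ : ‖Q‖ ≤ 1) (n : ℕ) : qPoch a Q n ≠ 0 := by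
  rw [qPoch]
  exact Finset.prod_ne_zero_iff.2 fun j _ =>
    one_sub_ne_zero_of_norm_lt_one (norm_term_lt_one ha hQ j)

lemma geom_sum_bound {r : ℝ} (h0 : 0 ≤ r) (h1 : r < 1) (n : ℕ) :
    ∑ j ∈ Finset.range n, r ^ j ≤ (1 - r)⁻¹ := by
  have hs : Summable fun j : ℕ => r ^ j := summable_geometric_of_lt_one h0 h1
  calc ∑ j ∈ Finset.range n, r ^ j ≤ ∑' j : ℕ, r ^ j :=
        Summable.sum_le_tsum _ (fun j _ => pow_nonneg h0 j) hs
    _ = (1 - r)⁻¹ := tsum_geometric_of_lt_one h0 h1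

lemma norm_qPoch_le (a : ℂ) {Q : ℂ} (hQ : ‖Q‖ < 1) (n : ℕ) :
    ‖qPoch a Q n‖ ≤ Real.exp (‖a‖ * (1 - ‖Q‖)⁻¹) := by
  rw [qPoch, norm_prod]
  calc ∏ j ∈ Finset.range n, ‖(1 : ℂ) - a * Q ^ j‖
      ≤ ∏ j ∈ Finset.range n, Real.exp (‖a‖ * ‖Q‖ ^ j) := by
        refine Finset.prod_le_prod (fun j _ => norm_nonneg _) fun j _ => ?_
        calc ‖(1 : ℂ) - a * Q ^ j‖ ≤ ‖(1 : ℂ)‖ + ‖a * Q ^ j‖ := norm_sub_le _ _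
          _ = ‖a‖ * ‖Q‖ ^ j + 1 := by rw [norm_one, norm_mul, norm_pow]; ring
          _ ≤ Real.exp (‖a‖ * ‖Q‖ ^ j) := Real.add_one_le_exp _
    _ = Real.exp (∑ j ∈ Finset.range n, ‖a‖ * ‖Q‖ ^ j) := (Real.exp_sum _ _).symm
    _ ≤ Real.exp (‖a‖ * (1 - ‖Q‖)⁻¹) := by
        apply Real.exp_le_exp.2
        rw [← Finset.mul_sum]
        exact mul_le_mul_of_nonneg_left (geom_sum_bound (norm_nonneg Q) hQ n) (norm_nonneg a)

lemma one_sub_ge_exp {t A : ℝ} (ht : 0 ≤ t) (htA : t ≤ A) (hA : A < 1) :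
    Real.exp (-(t * (1 - A)⁻¹)) ≤ 1 - t := by
  have hA1 : (0 : ℝ) < 1 - A := by linarith
  have ht1 : (0 : ℝ) < 1 - t := by linarith
  set y := t * (1 - A)⁻¹ with hy
  have hy0 : 0 ≤ y := by positivity
  have h1 : (1 - A) * y = t := by
    rw [hy]; field_simp
  have h2 : t ≤ (1 - t) * y := by nlinarith
  have h3 : Real.exp (-y) * (1 + y) ≤ 1 := by
    rw [Real.exp_neg, inv_mul_le_iff₀ (Real.exp_pos _)]
    have := Real.add_one_le_exp y
    linarith
  have h6 : (1 : ℝ) ≤ (1 - t) * (1 + y) := by nlinarith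
  nlinarith [Real.exp_pos (-y)]

lemma norm_qPoch_ge {a Q : ℂ} (ha : ‖a‖ < 1) (hQ : ‖Q‖ < 1) (n : ℕ) :
    Real.exp (-(‖a‖ * (1 - ‖Q‖)⁻¹ * (1 - ‖a‖)⁻¹)) ≤ ‖qPoch a Q n‖ := by
  rw [qPoch, norm_prod]
  calc Real.exp (-(‖a‖ * (1 - ‖Q‖)⁻¹ * (1 - ‖a‖)⁻¹))
      ≤ Real.exp (-(∑ j ∈ Finset.range n, ‖a‖ * ‖Q‖ ^ j * (1 - ‖a‖)⁻¹)) := by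
        apply Real.exp_le_exp.2
        rw [neg_le_neg_iff]
        rw [← Finset.sum_mul, ← Finset.mul_sum]
        have h1 : (0:ℝ) ≤ (1 - ‖a‖)⁻¹ := by
          have : (0:ℝ) < 1 - ‖a‖ := by linarith
          positivity
        apply mul_le_mul_of_nonneg_right _ h1
        exact mul_le_mul_of_nonneg_left (geom_sum_bound (norm_nonneg Q) hQ n) (norm_nonneg a)
    _ = ∏ j ∈ Finset.range n, Real.exp (-(‖a‖ * ‖Q‖ ^ j * (1 - ‖a‖)⁻¹)) := by
        rw [← Real.exp_sum, ← Finset.sum_neg_distrib]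
    _ ≤ ∏ j ∈ Finset.range n, ‖(1 : ℂ) - a * Q ^ j‖ := by
        refine Finset.prod_le_prod (fun j _ => (Real.exp_pos _).le) fun j _ => ?_
        have ht : (0:ℝ) ≤ ‖a‖ * ‖Q‖ ^ j := by positivity
        have htA : ‖a‖ * ‖Q‖ ^ j ≤ ‖a‖ := by
          have := pow_le_one₀ (norm_nonneg Q) hQ.le (n := j)
          calc ‖a‖ * ‖Q‖ ^ j ≤ ‖a‖ * 1 := mul_le_mul_of_nonneg_left this (norm_nonneg a)
            _ = ‖a‖ := mul_one _
        calc Real.exp (-(‖a‖ * ‖Q‖ ^ j * (1 - ‖a‖)⁻¹)) ≤ 1 - ‖a‖ * ‖Q‖ ^ j :=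
              one_sub_ge_exp ht htA ha
          _ = 1 - ‖a * Q ^ j‖ := by rw [norm_mul, norm_pow]
          _ ≤ ‖(1 : ℂ) - a * Q ^ j‖ := by
              have := norm_sub_norm_le (1 : ℂ) (a * Q ^ j)
              simpa using this

/-- The coefficient bound constant. -/
noncomputable def qK (a Q : ℂ) : ℝ :=
  Real.exp (‖a‖ * (1 - ‖Q‖)⁻¹ + ‖Q‖ * (1 - ‖Q‖)⁻¹ * (1 - ‖Q‖)⁻¹)

lemma qK_pos (a Q : ℂ) : 0 < qK a Q := Real.exp_pos _

lemma norm_qratio_le (a : ℂ) {Q : ℂ} (hQ : ‖Q‖ < 1) (n : ℕ) :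
    ‖qPoch a Q n / qPoch Q Q n‖ ≤ qK a Q := by
  rw [norm_div]
  have h1 := norm_qPoch_le a hQ n
  have h2 := norm_qPoch_ge hQ hQ n
  have h2pos : (0:ℝ) < Real.exp (-(‖Q‖ * (1 - ‖Q‖)⁻¹ * (1 - ‖Q‖)⁻¹)) := Real.exp_pos _
  calc ‖qPoch a Q n‖ / ‖qPoch Q Q n‖
      ≤ Real.exp (‖a‖ * (1 - ‖Q‖)⁻¹) / Real.exp (-(‖Q‖ * (1 - ‖Q‖)⁻¹ * (1 - ‖Q‖)⁻¹)) :=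
        div_le_div₀ (Real.exp_pos _).le h1 h2pos h2
    _ = qK a Q := by
        rw [qK, show ‖a‖ * (1 - ‖Q‖)⁻¹ + ‖Q‖ * (1 - ‖Q‖)⁻¹ * (1 - ‖Q‖)⁻¹
          = ‖a‖ * (1 - ‖Q‖)⁻¹ - -(‖Q‖ * (1 - ‖Q‖)⁻¹ * (1 - ‖Q‖)⁻¹) by ring, Real.exp_sub]

/-- The partial series. -/
noncomputable def qS (a Q w : ℂ) : ℂ := ∑' n : ℕ, qPoch a Q n / qPoch Q Q n * w ^ n

lemma summable_qterm (a : ℂ) {Q w : ℂ} (hQ : ‖Q‖ < 1) (hw : ‖w‖ < 1) :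
    Summable (fun n : ℕ => qPoch a Q n / qPoch Q Q n * w ^ n) := by
  apply Summable.of_norm
  refine Summable.of_nonneg_of_le (fun n => norm_nonneg _) ?_
    ((summable_geometric_of_lt_one (norm_nonneg w) hw).mul_left (qK a Q))
  intro n
  rw [norm_mul, norm_pow]
  exact mul_le_mul_of_nonneg_right (norm_qratio_le a hQ n) (by positivity)

lemma qratio_rec (a : ℂ) {Q : ℂ} (hQ : ‖Q‖ < 1) (n : ℕ) :
    qPoch a Q (n + 1) / qPoch Q Q (n + 1) * (1 - Q ^ (n + 1))
      = qPoch a Q n / qPoch Q Q n * (1 - a * Q ^ n) := by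
  have hD : qPoch Q Q n ≠ 0 := qPoch_ne_zero hQ hQ.le n
  have hD2 : (1 : ℂ) - Q * Q ^ n ≠ 0 :=
    one_sub_ne_zero_of_norm_lt_one (norm_term_lt_one hQ hQ.le n)
  rw [qPoch_succ a, qPoch_succ Q]
  have hpow : Q ^ (n + 1) = Q * Q ^ n := by rw [pow_succ]; ring
  rw [hpow]
  rw [div_mul_eq_mul_div, div_mul_eq_mul_div, div_eq_div_iff (mul_ne_zero hD hD2) hD]
  ring

lemma multipliable_one_sub {w Q : ℂ} (hw : ‖w‖ < 1) (hQ : ‖Q‖ < 1) :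
    Multipliable (fun j : ℕ => 1 - w * Q ^ j) := by
  apply Complex.multipliable_of_summable_log
  apply Summable.of_norm
  refine Summable.of_nonneg_of_le (fun n => norm_nonneg _) ?_
    (((summable_geometric_of_lt_one (norm_nonneg Q) hQ).mul_left ‖w‖).mul_left
      (‖w‖ * (1 - ‖w‖)⁻¹ / 2 + 1))
  · intro n
    have hn : ‖w * Q ^ n‖ < 1 := norm_term_lt_one hw hQ.le n
    have hb := Complex.norm_log_one_add_le (z := -(w * Q ^ n)) (by rwa [norm_neg])
    have he : (1 : ℂ) + -(w * Q ^ n) = 1 - w * Q ^ n := by ring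
    rw [he, norm_neg] at hb
    set t := ‖w * Q ^ n‖ with htdef
    have ht0 : 0 ≤ t := norm_nonneg _
    have htw : t ≤ ‖w‖ := by
      rw [htdef, norm_mul, norm_pow]
      have := pow_le_one₀ (norm_nonneg Q) hQ.le (n := n)
      calc ‖w‖ * ‖Q‖ ^ n ≤ ‖w‖ * 1 := mul_le_mul_of_nonneg_left this (norm_nonneg w)
        _ = ‖w‖ := mul_one _
    have hw1 : (0:ℝ) < 1 - ‖w‖ := by linarith
    have ht1 : (0:ℝ) < 1 - t := by linarith
    have hinvle : (1 - t)⁻¹ ≤ (1 - ‖w‖)⁻¹ := by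
      apply inv_anti₀ hw1
      linarith
    have hteq : t = ‖w‖ * ‖Q‖ ^ n := by rw [htdef, norm_mul, norm_pow]
    calc ‖Complex.log (1 - w * Q ^ n)‖ ≤ t ^ 2 * (1 - t)⁻¹ / 2 + t := hb
      _ ≤ t * ‖w‖ * (1 - ‖w‖)⁻¹ / 2 + t := by
          have h1 : t ^ 2 * (1 - t)⁻¹ ≤ t * ‖w‖ * (1 - ‖w‖)⁻¹ := by
            have h2 : t ^ 2 ≤ t * ‖w‖ := by nlinarith
            have h3 : (0:ℝ) ≤ t * ‖w‖ := by positivity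
            calc t ^ 2 * (1 - t)⁻¹ ≤ t * ‖w‖ * (1 - t)⁻¹ :=
                  mul_le_mul_of_nonneg_right h2 (by positivity)
              _ ≤ t * ‖w‖ * (1 - ‖w‖)⁻¹ := mul_le_mul_of_nonneg_left hinvle h3
          linarith
      _ = (‖w‖ * (1 - ‖w‖)⁻¹ / 2 + 1) * t := by ring
      _ = (‖w‖ * (1 - ‖w‖)⁻¹ / 2 + 1) * (‖w‖ * ‖Q‖ ^ n) := by rw [hteq]

lemma tendsto_qPoch {w Q : ℂ} (hw : ‖w‖ < 1) (hQ : ‖Q‖ < 1) :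
    Tendsto (fun n => qPoch w Q n) atTop (𝓝 (qPochInf w Q)) :=
  (multipliable_one_sub hw hQ).hasProd.tendsto_prod_nat

lemma qPochInf_ne_zero {w Q : ℂ} (hw : ‖w‖ < 1) (hQ : ‖Q‖ < 1) : qPochInf w Q ≠ 0 := by
  have h1 : Tendsto (fun n => ‖qPoch w Q n‖) atTop (𝓝 ‖qPochInf w Q‖) :=
    (tendsto_qPoch hw hQ).norm
  have h2 : Real.exp (-(‖w‖ * (1 - ‖Q‖)⁻¹ * (1 - ‖w‖)⁻¹)) ≤ ‖qPochInf w Q‖ :=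
    ge_of_tendsto' h1 (fun n => norm_qPoch_ge hw hQ n)
  intro h
  rw [h, norm_zero] at h2
  exact absurd h2 (not_le.2 (Real.exp_pos _))

/-- The functional equation. -/
lemma qS_feq (a : ℂ) {Q w : ℂ} (hQ : ‖Q‖ < 1) (hw : ‖w‖ < 1) :
    (1 - w) * qS a Q w = (1 - a * w) * qS a Q (Q * w) := by
  set c : ℕ → ℂ := fun n => qPoch a Q n / qPoch Q Q n with hc
  have hQw : ‖Q * w‖ < 1 := by
    rw [norm_mul]
    calc ‖Q‖ * ‖w‖ ≤ 1 * ‖w‖ := mul_le_mul_of_nonneg_right hQ.le (norm_nonneg w)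
      _ = ‖w‖ := one_mul _
      _ < 1 := hw
  have hg : Summable (fun n : ℕ => c n * w ^ n) := summable_qterm a hQ hw
  have hh : Summable (fun n : ℕ => c n * (Q * w) ^ n) := summable_qterm a hQ hQw
  set u : ℕ → ℂ := fun n => (1 - w) * (c n * w ^ n) - (1 - a * w) * (c n * (Q * w) ^ n) with hu
  set t : ℕ → ℂ := fun n => c n * (1 - a * Q ^ n) * w ^ (n + 1) with ht
  have key : ∀ N, ∑ n ∈ Finset.range (N + 1), u n = -(t N) := by
    intro N
    induction N with
    | zero =>
      rw [Finset.sum_range_one]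
      show (1 - w) * (c 0 * w ^ 0) - (1 - a * w) * (c 0 * (Q * w) ^ 0)
        = -(c 0 * (1 - a * Q ^ 0) * w ^ (0 + 1))
      ring
    | succ N ih =>
      rw [Finset.sum_range_succ, ih]
      have hrecc : c (N + 1) * (1 - Q ^ (N + 1)) = c N * (1 - a * Q ^ N) :=
        qratio_rec a hQ N
      show -(c N * (1 - a * Q ^ N) * w ^ (N + 1))
          + ((1 - w) * (c (N + 1) * w ^ (N + 1))
            - (1 - a * w) * (c (N + 1) * (Q * w) ^ (N + 1)))
        = -(c (N + 1) * (1 - a * Q ^ (N + 1)) * w ^ (N + 1 + 1))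
      rw [mul_pow]
      linear_combination (w ^ (N + 1)) * hrecc
  have husum : Summable u := (hg.mul_left (1 - w)).sub (hh.mul_left (1 - a * w))
  have hlim1 : Tendsto (fun N => ∑ n ∈ Finset.range (N + 1), u n) atTop (𝓝 (∑' n, u n)) :=
    husum.hasSum.tendsto_sum_nat.comp (tendsto_add_atTop_nat 1)
  have hlim2 : Tendsto (fun N => -(t N)) atTop (𝓝 0) := by
    refine squeeze_zero_norm (a := fun N => qK a Q * (1 + ‖a‖) * ‖w‖ ^ (N + 1)) ?_ ?_
    · intro N
      rw [norm_neg, ht]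
      simp only
      rw [norm_mul, norm_mul, norm_pow]
      have h1 : ‖c N‖ ≤ qK a Q := norm_qratio_le a hQ N
      have h2 : ‖(1 : ℂ) - a * Q ^ N‖ ≤ 1 + ‖a‖ := by
        calc ‖(1 : ℂ) - a * Q ^ N‖ ≤ ‖(1 : ℂ)‖ + ‖a * Q ^ N‖ := norm_sub_le _ _
          _ = 1 + ‖a‖ * ‖Q‖ ^ N := by rw [norm_one, norm_mul, norm_pow]
          _ ≤ 1 + ‖a‖ := by
              have h3 : ‖Q‖ ^ N ≤ 1 := pow_le_one₀ (norm_nonneg Q) hQ.le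
              have := mul_le_mul_of_nonneg_left h3 (norm_nonneg a)
              linarith [this]
      exact mul_le_mul_of_nonneg_right
        (mul_le_mul h1 h2 (norm_nonneg _) (qK_pos a Q).le) (by positivity)
    · have hp : Tendsto (fun N : ℕ => ‖w‖ ^ (N + 1)) atTop (𝓝 0) :=
        (tendsto_pow_atTop_nhds_zero_of_lt_one (norm_nonneg w) hw).comp
          (tendsto_add_atTop_nat 1)
      have := hp.const_mul (qK a Q * (1 + ‖a‖))
      simpa using this
  have h0 : ∑' n, u n = 0 := by
    have : Tendsto (fun N => ∑ n ∈ Finset.range (N + 1), u n) atTop (𝓝 0) := by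
      rw [show (fun N => ∑ n ∈ Finset.range (N + 1), u n) = fun N => -(t N) from funext key]
      exact hlim2
    exact tendsto_nhds_unique hlim1 this
  have hsplit : (1 - w) * qS a Q w - (1 - a * w) * qS a Q (Q * w) = ∑' n, u n := by
    have e1 : qS a Q w = ∑' n, c n * w ^ n := rfl
    have e2 : qS a Q (Q * w) = ∑' n, c n * (Q * w) ^ n := rfl
    rw [e1, e2, ← tsum_mul_left, ← tsum_mul_left,
      ← Summable.tsum_sub (hg.mul_left (1 - w)) (hh.mul_left (1 - a * w))]
  rw [h0] at hsplit
  exact sub_eq_zero.mp hsplit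

/-- Iteration of the functional equation. -/
lemma qS_iter (a : ℂ) {Q w : ℂ} (hQ : ‖Q‖ < 1) (hw : ‖w‖ < 1) (n : ℕ) :
    qPoch w Q n * qS a Q w = qPoch (a * w) Q n * qS a Q (Q ^ n * w) := by
  induction n with
  | zero => simp [qPoch]
  | succ n ih =>
    have hn : ‖Q ^ n * w‖ < 1 := by
      rw [norm_mul, norm_pow]
      calc ‖Q‖ ^ n * ‖w‖ ≤ 1 * ‖w‖ :=
            mul_le_mul_of_nonneg_right (pow_le_one₀ (norm_nonneg Q) hQ.le) (norm_nonneg w)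
        _ = ‖w‖ := one_mul _
        _ < 1 := hw
    have hfe := qS_feq a hQ hn
    have harg : Q * (Q ^ n * w) = Q ^ (n + 1) * w := by rw [pow_succ]; ring
    rw [harg] at hfe
    rw [qPoch_succ, qPoch_succ]
    calc qPoch w Q n * (1 - w * Q ^ n) * qS a Q w
        = (1 - Q ^ n * w) * (qPoch w Q n * qS a Q w) := by ring
      _ = (1 - Q ^ n * w) * (qPoch (a * w) Q n * qS a Q (Q ^ n * w)) := by rw [ih]
      _ = qPoch (a * w) Q n * ((1 - Q ^ n * w) * qS a Q (Q ^ n * w)) := by ring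
      _ = qPoch (a * w) Q n * ((1 - a * (Q ^ n * w)) * qS a Q (Q ^ (n + 1) * w)) := by
          rw [hfe]
      _ = qPoch (a * w) Q n * (1 - a * w * Q ^ n) * qS a Q (Q ^ (n + 1) * w) := by ring

lemma qS_tendsto_one (a : ℂ) {Q w : ℂ} (hQ : ‖Q‖ < 1) (hw : ‖w‖ < 1) :
    Tendsto (fun n => qS a Q (Q ^ n * w)) atTop (𝓝 1) := by
  have hbound : ∀ u : ℂ, ‖u‖ ≤ ‖w‖ →
      ‖qS a Q u - 1‖ ≤ qK a Q * (1 - ‖w‖)⁻¹ * ‖u‖ := by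
    intro u hu
    have hu1 : ‖u‖ < 1 := lt_of_le_of_lt hu hw
    have hsum : Summable (fun n : ℕ => qPoch a Q n / qPoch Q Q n * u ^ n) :=
      summable_qterm a hQ hu1
    have hshift := Summable.tsum_eq_zero_add hsum
    have h00 : qPoch a Q 0 / qPoch Q Q 0 * u ^ 0 = 1 := by simp [qPoch_zero]
    rw [h00] at hshift
    have e0 : qS a Q u = ∑' n : ℕ, qPoch a Q n / qPoch Q Q n * u ^ n := rfl
    have heq : qS a Q u - 1
        = ∑' n : ℕ, qPoch a Q (n + 1) / qPoch Q Q (n + 1) * u ^ (n + 1) := by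
      rw [e0, hshift]; ring
    rw [heq]
    have hg0 : HasSum (fun n : ℕ => qK a Q * ‖u‖ * ‖u‖ ^ n)
        (qK a Q * ‖u‖ * (1 - ‖u‖)⁻¹) :=
      (hasSum_geometric_of_lt_one (norm_nonneg u) hu1).mul_left _
    have hb := tsum_of_norm_bounded
      (f := fun n : ℕ => qPoch a Q (n + 1) / qPoch Q Q (n + 1) * u ^ (n + 1)) hg0 (fun n => by
      rw [norm_mul, norm_pow, pow_succ]
      calc ‖qPoch a Q (n + 1) / qPoch Q Q (n + 1)‖ * (‖u‖ ^ n * ‖u‖)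
          ≤ qK a Q * (‖u‖ ^ n * ‖u‖) :=
            mul_le_mul_of_nonneg_right (norm_qratio_le a hQ (n + 1)) (by positivity)
        _ = qK a Q * ‖u‖ * ‖u‖ ^ n := by ring)
    refine hb.trans ?_
    have hw1 : (0:ℝ) < 1 - ‖w‖ := by linarith
    have hu2 : (0:ℝ) < 1 - ‖u‖ := by linarith
    have hinv : (1 - ‖u‖)⁻¹ ≤ (1 - ‖w‖)⁻¹ := by
      apply inv_anti₀ hw1; linarith
    calc qK a Q * ‖u‖ * (1 - ‖u‖)⁻¹ ≤ qK a Q * ‖u‖ * (1 - ‖w‖)⁻¹ :=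
          mul_le_mul_of_nonneg_left hinv (mul_nonneg (qK_pos a Q).le (norm_nonneg u))
      _ = qK a Q * (1 - ‖w‖)⁻¹ * ‖u‖ := by ring
  rw [← tendsto_sub_nhds_zero_iff]
  refine squeeze_zero_norm
    (a := fun n => qK a Q * (1 - ‖w‖)⁻¹ * (‖Q‖ ^ n * ‖w‖)) ?_ ?_
  · intro n
    have h1 : ‖Q ^ n * w‖ ≤ ‖w‖ := by
      rw [norm_mul, norm_pow]
      calc ‖Q‖ ^ n * ‖w‖ ≤ 1 * ‖w‖ :=
            mul_le_mul_of_nonneg_right (pow_le_one₀ (norm_nonneg Q) hQ.le) (norm_nonneg w)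
        _ = ‖w‖ := one_mul _
    have h2 := hbound (Q ^ n * w) h1
    have h3 : ‖Q ^ n * w‖ = ‖Q‖ ^ n * ‖w‖ := by rw [norm_mul, norm_pow]
    rw [h3] at h2
    exact h2
  · have hp : Tendsto (fun n : ℕ => ‖Q‖ ^ n) atTop (𝓝 0) :=
      tendsto_pow_atTop_nhds_zero_of_lt_one (norm_nonneg Q) hQ
    have := (hp.mul_const ‖w‖).const_mul (qK a Q * (1 - ‖w‖)⁻¹)
    simpa using this

theorem qbinom_inf (a : ℂ) {Q w : ℂ} (hQ : ‖Q‖ < 1) (ha : ‖a‖ ≤ 1) (hw : ‖w‖ < 1) :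
    qS a Q w = qPochInf (a * w) Q / qPochInf w Q := by
  have haw : ‖a * w‖ < 1 := by
    rw [norm_mul]
    calc ‖a‖ * ‖w‖ ≤ 1 * ‖w‖ := mul_le_mul_of_nonneg_right ha (norm_nonneg w)
      _ = ‖w‖ := one_mul _
      _ < 1 := hw
  have T1 : Tendsto (fun n => qPoch w Q n * qS a Q w) atTop (𝓝 (qPochInf w Q * qS a Q w)) :=
    (tendsto_qPoch hw hQ).mul_const _
  have T2 : Tendsto (fun n => qPoch (a * w) Q n * qS a Q (Q ^ n * w)) atTop
      (𝓝 (qPochInf (a * w) Q * 1)) :=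
    (tendsto_qPoch haw hQ).mul (qS_tendsto_one a hQ hw)
  have heq : qPochInf w Q * qS a Q w = qPochInf (a * w) Q * 1 := by
    refine tendsto_nhds_unique ?_ T2
    rw [show (fun n => qPoch (a * w) Q n * qS a Q (Q ^ n * w))
        = fun n => qPoch w Q n * qS a Q w from funext fun n => (qS_iter a hQ hw n).symm]
    exact T1
  rw [mul_one] at heq
  rw [eq_div_iff (qPochInf_ne_zero hw hQ)]
  rw [← heq]; ring

/-- even–odd dissection of `(−xq^{s+r};q^M)_∞/(xq^s;q^M)_∞`. -/
theorem stmt14 (M s r : ℕ) (hM : 0 < M) (hs : 0 < s) (hr : r ≤ M)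
    (q x : ℂ) (hq : ‖q‖ < 1) (hx : ‖x‖ < 1) :
    qPochInf (-(x * q ^ (s + r))) (q ^ M) / qPochInf (x * q ^ s) (q ^ M)
      = phi21 (-(q ^ r)) (-(q ^ (r + M))) (q ^ M) (q ^ (2 * M)) (x ^ 2 * q ^ (2 * s))
        + x * q ^ s * (1 + q ^ r) / (1 - q ^ M)
          * phi21 (-(q ^ (r + 2 * M))) (-(q ^ (r + M))) (q ^ (3 * M)) (q ^ (2 * M))
              (x ^ 2 * q ^ (2 * s)) := by
  have hqle : ∀ k : ℕ, ‖q ^ k‖ ≤ 1 := fun k => by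
    rw [norm_pow]; exact pow_le_one₀ (norm_nonneg q) hq.le
  have hQ : ‖q ^ M‖ < 1 := by
    rw [norm_pow]; exact pow_lt_one₀ (norm_nonneg q) hq hM.ne'
  have ha : ‖-(q ^ r)‖ ≤ 1 := by rw [norm_neg]; exact hqle r
  have hw : ‖x * q ^ s‖ < 1 := by
    rw [norm_mul]
    calc ‖x‖ * ‖q ^ s‖ ≤ ‖x‖ * 1 := mul_le_mul_of_nonneg_left (hqle s) (norm_nonneg x)
      _ = ‖x‖ := mul_one _
      _ < 1 := hx
  set a : ℂ := -(q ^ r) with hadef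
  set Q : ℂ := q ^ M with hQdef
  set w : ℂ := x * q ^ s with hwdef
  have hkey := qbinom_inf a hQ ha hw
  have harg : a * w = -(x * q ^ (s + r)) := by
    rw [hadef, hwdef, pow_add]; ring
  rw [harg] at hkey
  rw [← hkey]
  -- even/odd dissection
  have hsum : Summable (fun n : ℕ => qPoch a Q n / qPoch Q Q n * w ^ n) :=
    summable_qterm a hQ hw
  have he : Summable (fun k : ℕ => qPoch a Q (2 * k) / qPoch Q Q (2 * k) * w ^ (2 * k)) :=
    hsum.comp_injective (fun m n h => by
      have h2 : 2 * m = 2 * n := h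
      omega)
  have ho : Summable
      (fun k : ℕ => qPoch a Q (2 * k + 1) / qPoch Q Q (2 * k + 1) * w ^ (2 * k + 1)) :=
    hsum.comp_injective (fun m n h => by
      have h2 : 2 * m + 1 = 2 * n + 1 := h
      omega)
  have hsplit := tsum_even_add_odd (f := fun n => qPoch a Q n / qPoch Q Q n * w ^ n) he ho
  have e0 : qS a Q w = ∑' n : ℕ, qPoch a Q n / qPoch Q Q n * w ^ n := rfl
  rw [e0, ← hsplit]
  -- argument identities
  have e1 : Q ^ 2 = q ^ (2 * M) := by rw [hQdef, ← pow_mul, Nat.mul_comm]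
  have e2 : a * Q = -(q ^ (r + M)) := by rw [hadef, hQdef, pow_add]; ring
  have e3 : Q * Q = q ^ (2 * M) := by rw [hQdef, ← pow_add, two_mul]
  have e4 : ∀ k : ℕ, w ^ (2 * k) = (x ^ 2 * q ^ (2 * s)) ^ k := by
    intro k
    rw [pow_mul]
    congr 1
    rw [hwdef, mul_pow, ← pow_mul, Nat.mul_comm]
  have e5 : -(q ^ (r + M)) * Q = -(q ^ (r + 2 * M)) := by
    rw [hQdef, show r + 2 * M = r + M + M from by ring, pow_add]; ring
  have e6 : q ^ (2 * M) * Q = q ^ (3 * M) := by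
    rw [hQdef, ← pow_add, show 2 * M + M = 3 * M from by ring]
  have e7 : (1 : ℂ) - a = 1 + q ^ r := by rw [hadef]; ring
  congr 1
  · -- even part
    rw [phi21]
    apply tsum_congr
    intro k
    beta_reduce
    rw [qPoch_two_mul a Q k, qPoch_two_mul Q Q k, e2, e3, e1, e4 k]
    ring
  · -- odd part
    rw [phi21, ← tsum_mul_left]
    apply tsum_congr
    intro k
    beta_reduce
    rw [qPoch_succ' a Q (2 * k), qPoch_succ' Q Q (2 * k),
      qPoch_two_mul (a * Q) Q k, qPoch_two_mul (Q * Q) Q k,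
      e2, e3, e5, e6, e1, e7, pow_succ, e4 k]
    simp only [div_eq_mul_inv, mul_inv]
    ring
end
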